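/- Under the hypotheses of the Taylor-coefficient comparison for f'² + g'² − (1+f+g)(f''+g'') = ψ(1+f+g), the following identity holds: (Γ₂ − 2Γ₁)·a₁·b₁ = 0, where a₁=f'(0), b₁=g'(0), Γ_k=ψ^{(k)}(1). -/

import Mathlib

open Filter

private lemma analyticAt_deriv' {f : ℝ → ℝ} {x : ℝ} (h : AnalyticAt ℝ f x) :
    AnalyticAt ℝ (deriv f) x := by
  obtain ⟨s, hs, h⟩ := h.exists_mem_nhds_analyticOnNhd
  exact h.deriv x (mem_of_mem_nhds hs)

private lemma main_rel
    (f g ψ : ℝ → ℝ)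
    (hf : AnalyticAt ℝ f 0) (hg : AnalyticAt ℝ g 0) (hψ : AnalyticAt ℝ ψ 1)
    (hf0 : f 0 = 0) (hg0 : g 0 = 0)
    (heq : ∀ᶠ p : ℝ × ℝ in nhds (0, 0),
      (deriv f p.1) ^ 2 + (deriv g p.2) ^ 2
        - (1 + f p.1 + g p.2) * (deriv (deriv f) p.1 + deriv (deriv g) p.2)
        = ψ (1 + f p.1 + g p.2)) (α β : ℝ) :
    (2*α*(deriv f 0)*(deriv (deriv f) 0) + 2*β*(deriv g 0)*(deriv (deriv g) 0)
      - (α*deriv f 0 + β*deriv g 0)*(deriv (deriv f) 0 + deriv (deriv g) 0)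
      - (α*deriv (deriv (deriv f)) 0 + β*deriv (deriv (deriv g)) 0)
      - deriv ψ 1 * (α*deriv f 0 + β*deriv g 0) = 0)
    ∧ (2*α^2*((deriv (deriv f) 0)^2 + deriv f 0 * deriv (deriv (deriv f)) 0)
      + 2*β^2*((deriv (deriv g) 0)^2 + deriv g 0 * deriv (deriv (deriv g)) 0)
      - (α^2*deriv (deriv f) 0 + β^2*deriv (deriv g) 0)*(deriv (deriv f) 0 + deriv (deriv g) 0)
      - 2*(α*deriv f 0 + β*deriv g 0)*(α*deriv (deriv (deriv f)) 0 + β*deriv (deriv (deriv g)) 0)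
      - (α^2*deriv (deriv (deriv (deriv f))) 0 + β^2*deriv (deriv (deriv (deriv g))) 0)
      - deriv (deriv ψ) 1 * (α*deriv f 0 + β*deriv g 0)^2
      - deriv ψ 1 * (α^2*deriv (deriv f) 0 + β^2*deriv (deriv g) 0) = 0) := by
  set F : ℝ → ℝ := fun t =>
    (deriv f (α*t))^2 + (deriv g (β*t))^2
      - (1 + f (α*t) + g (β*t)) * (deriv (deriv f) (α*t) + deriv (deriv g) (β*t))
      - ψ (1 + f (α*t) + g (β*t)) with hFdef
  set D : ℝ → ℝ := fun t =>
    2*α*(deriv f (α*t))*(deriv (deriv f) (α*t))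
      + 2*β*(deriv g (β*t))*(deriv (deriv g) (β*t))
      - (α*deriv f (α*t) + β*deriv g (β*t))
          * (deriv (deriv f) (α*t) + deriv (deriv g) (β*t))
      - (1 + f (α*t) + g (β*t))
          * (α*deriv (deriv (deriv f)) (α*t) + β*deriv (deriv (deriv g)) (β*t))
      - deriv ψ (1 + f (α*t) + g (β*t)) * (α*deriv f (α*t) + β*deriv g (β*t)) with hDdef
  have hta : Tendsto (fun t : ℝ => α*t) (nhds 0) (nhds 0) := by
    simpa using (show Continuous (fun t : ℝ => α*t) by fun_prop).tendsto (0:ℝ)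
  have htb : Tendsto (fun t : ℝ => β*t) (nhds 0) (nhds 0) := by
    simpa using (show Continuous (fun t : ℝ => β*t) by fun_prop).tendsto (0:ℝ)
  have hinn : Tendsto (fun t : ℝ => 1 + f (α*t) + g (β*t)) (nhds 0) (nhds 1) := by
    have h1 : Tendsto (fun t : ℝ => f (α*t)) (nhds 0) (nhds 0) := by
      have := hf.continuousAt.tendsto.comp hta
      simpa [hf0, Function.comp_def] using this
    have h2 : Tendsto (fun t : ℝ => g (β*t)) (nhds 0) (nhds 0) := by
      have := hg.continuousAt.tendsto.comp htb
      simpa [hg0, Function.comp_def] using this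
    have := ((tendsto_const_nhds (x := (1:ℝ)) (f := nhds (0:ℝ))).add h1).add h2
    simpa using this
  have hfa : ∀ᶠ t in nhds (0:ℝ), AnalyticAt ℝ f (α*t) :=
    hta.eventually hf.eventually_analyticAt
  have hga : ∀ᶠ t in nhds (0:ℝ), AnalyticAt ℝ g (β*t) :=
    htb.eventually hg.eventually_analyticAt
  have hψa : ∀ᶠ t in nhds (0:ℝ), AnalyticAt ℝ ψ (1 + f (α*t) + g (β*t)) :=
    hinn.eventually hψ.eventually_analyticAt
  have hpm : Tendsto (fun t : ℝ => ((α*t, β*t) : ℝ×ℝ)) (nhds 0) (nhds (0,0)) :=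
    hta.prodMk_nhds htb
  have hF0 : F =ᶠ[nhds (0:ℝ)] (fun _ => 0) := by
    filter_upwards [hpm.eventually heq] with t ht
    simp only [hFdef]
    exact sub_eq_zero.mpr ht
  -- first derivative of F
  have hFD : ∀ᶠ t in nhds (0:ℝ), HasDerivAt F (D t) t := by
    filter_upwards [hfa, hga, hψa] with t hft hgt hψt
    have hA : HasDerivAt (fun s : ℝ => α*s) α t := by
      simpa using (hasDerivAt_id t).const_mul α
    have hB : HasDerivAt (fun s : ℝ => β*s) β t := by
      simpa using (hasDerivAt_id t).const_mul β
    have df0 : HasDerivAt (fun s => f (α*s)) (deriv f (α*t) * α) t :=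
      (hft.differentiableAt.hasDerivAt).comp t hA
    have df1 : HasDerivAt (fun s => deriv f (α*s)) (deriv (deriv f) (α*t) * α) t :=
      ((analyticAt_deriv' hft).differentiableAt.hasDerivAt).comp t hA
    have df2 : HasDerivAt (fun s => deriv (deriv f) (α*s))
        (deriv (deriv (deriv f)) (α*t) * α) t :=
      ((analyticAt_deriv' (analyticAt_deriv' hft)).differentiableAt.hasDerivAt).comp t hA
    have dg0 : HasDerivAt (fun s => g (β*s)) (deriv g (β*t) * β) t :=
      (hgt.differentiableAt.hasDerivAt).comp t hB
    have dg1 : HasDerivAt (fun s => deriv g (β*s)) (deriv (deriv g) (β*t) * β) t :=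
      ((analyticAt_deriv' hgt).differentiableAt.hasDerivAt).comp t hB
    have dg2 : HasDerivAt (fun s => deriv (deriv g) (β*s))
        (deriv (deriv (deriv g)) (β*t) * β) t :=
      ((analyticAt_deriv' (analyticAt_deriv' hgt)).differentiableAt.hasDerivAt).comp t hB
    have hin : HasDerivAt (fun s => 1 + f (α*s) + g (β*s))
        (deriv f (α*t) * α + deriv g (β*t) * β) t := (df0.const_add 1).add dg0
    have hψd : HasDerivAt (fun s => ψ (1 + f (α*s) + g (β*s)))
        (deriv ψ (1 + f (α*t) + g (β*t)) * (deriv f (α*t) * α + deriv g (β*t) * β)) t :=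
      (hψt.differentiableAt.hasDerivAt).comp t hin
    have H : HasDerivAt F _ t := (((df1.pow 2).add (dg1.pow 2)).sub (hin.mul (df2.add dg2))).sub hψd
    convert H using 1
    simp only [hDdef, Pi.add_apply]; push_cast; ring
  have hD0 : D =ᶠ[nhds (0:ℝ)] (fun _ => 0) := by
    filter_upwards [hF0.deriv, hFD] with t h1t hFDt
    rw [← hFDt.deriv, h1t]
    simp
  constructor
  · have e1 := hD0.eq_of_nhds
    simp only [hDdef, mul_zero, hf0, hg0, add_zero] at e1
    linear_combination e1
  · -- second derivative: differentiate D at 0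
    have ha0 : (α*(0:ℝ)) = 0 := mul_zero α
    have hb0 : (β*(0:ℝ)) = 0 := mul_zero β
    have hy0 : (1 + f (α*0) + g (β*0)) = 1 := by rw [ha0, hb0, hf0, hg0]; ring
    have hft : AnalyticAt ℝ f (α*0) := by rw [ha0]; exact hf
    have hgt : AnalyticAt ℝ g (β*0) := by rw [hb0]; exact hg
    have hψt : AnalyticAt ℝ (deriv ψ) (1 + f (α*0) + g (β*0)) := by
      rw [hy0]; exact analyticAt_deriv' hψ
    have hA : HasDerivAt (fun s : ℝ => α*s) α (0:ℝ) := by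
      simpa using (hasDerivAt_id (0:ℝ)).const_mul α
    have hB : HasDerivAt (fun s : ℝ => β*s) β (0:ℝ) := by
      simpa using (hasDerivAt_id (0:ℝ)).const_mul β
    have df0 : HasDerivAt (fun s => f (α*s)) (deriv f (α*0) * α) 0 :=
      (hft.differentiableAt.hasDerivAt).comp 0 hA
    have df1 : HasDerivAt (fun s => deriv f (α*s)) (deriv (deriv f) (α*0) * α) 0 :=
      ((analyticAt_deriv' hft).differentiableAt.hasDerivAt).comp 0 hA
    have df2 : HasDerivAt (fun s => deriv (deriv f) (α*s))
        (deriv (deriv (deriv f)) (α*0) * α) 0 :=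
      ((analyticAt_deriv' (analyticAt_deriv' hft)).differentiableAt.hasDerivAt).comp 0 hA
    have df3 : HasDerivAt (fun s => deriv (deriv (deriv f)) (α*s))
        (deriv (deriv (deriv (deriv f))) (α*0) * α) 0 :=
      ((analyticAt_deriv' (analyticAt_deriv'
        (analyticAt_deriv' hft))).differentiableAt.hasDerivAt).comp 0 hA
    have dg0 : HasDerivAt (fun s => g (β*s)) (deriv g (β*0) * β) 0 :=
      (hgt.differentiableAt.hasDerivAt).comp 0 hB
    have dg1 : HasDerivAt (fun s => deriv g (β*s)) (deriv (deriv g) (β*0) * β) 0 :=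
      ((analyticAt_deriv' hgt).differentiableAt.hasDerivAt).comp 0 hB
    have dg2 : HasDerivAt (fun s => deriv (deriv g) (β*s))
        (deriv (deriv (deriv g)) (β*0) * β) 0 :=
      ((analyticAt_deriv' (analyticAt_deriv' hgt)).differentiableAt.hasDerivAt).comp 0 hB
    have dg3 : HasDerivAt (fun s => deriv (deriv (deriv g)) (β*s))
        (deriv (deriv (deriv (deriv g))) (β*0) * β) 0 :=
      ((analyticAt_deriv' (analyticAt_deriv'
        (analyticAt_deriv' hgt))).differentiableAt.hasDerivAt).comp 0 hB
    have hin : HasDerivAt (fun s => 1 + f (α*s) + g (β*s))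
        (deriv f (α*0) * α + deriv g (β*0) * β) 0 := (df0.const_add 1).add dg0
    have hψd : HasDerivAt (fun s => deriv ψ (1 + f (α*s) + g (β*s)))
        (deriv (deriv ψ) (1 + f (α*0) + g (β*0))
          * (deriv f (α*0) * α + deriv g (β*0) * β)) 0 :=
      by have := (hψt.differentiableAt.hasDerivAt).comp 0 hin; exact this
    have T1 := (df1.const_mul (2*α)).mul df2
    have T2 := (dg1.const_mul (2*β)).mul dg2
    have T3 := ((df1.const_mul α).add (dg1.const_mul β)).mul (df2.add dg2)
    have T4 := hin.mul ((df3.const_mul α).add (dg3.const_mul β))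
    have T5 := hψd.mul ((df1.const_mul α).add (dg1.const_mul β))
    have HD := (((T1.add T2).sub T3).sub T4).sub T5
    have e2 : deriv D 0 = 0 := by
      have := hD0.deriv.eq_of_nhds
      simpa using this
    have e3 : deriv D 0 = _ := HD.deriv
    rw [e2] at e3
    simp only [Pi.add_apply, mul_zero, hf0, hg0, add_zero, hy0] at e3
    linear_combination -e3

/-- From the Taylor-coefficient comparison for
`f'² + g'² − (1+f+g)(f''+g'') = ψ(1+f+g)` one deduces `(Γ₂ − 2Γ₁)·a₁·b₁ = 0`,
where `a₁ = f'(0)`, `b₁ = g'(0)`, `Γₖ = ψ⁽ᵏ⁾(1)`. -/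
theorem gamma_identity_a1_b1
    (f g ψ : ℝ → ℝ)
    (hf : AnalyticAt ℝ f 0) (hg : AnalyticAt ℝ g 0) (hψ : AnalyticAt ℝ ψ 1)
    (hf0 : f 0 = 0) (hg0 : g 0 = 0)
    (heq : ∀ᶠ p : ℝ × ℝ in nhds (0, 0),
      (deriv f p.1) ^ 2 + (deriv g p.2) ^ 2
        - (1 + f p.1 + g p.2) * (deriv (deriv f) p.1 + deriv (deriv g) p.2)
        = ψ (1 + f p.1 + g p.2)) :
    (iteratedDeriv 2 ψ 1 - 2 * deriv ψ 1) * deriv f 0 * deriv g 0 = 0 := by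
  have k1a := (main_rel f g ψ hf hg hψ hf0 hg0 heq 1 0).1
  have k1b := (main_rel f g ψ hf hg hψ hf0 hg0 heq 0 1).1
  have k2a := (main_rel f g ψ hf hg hψ hf0 hg0 heq 1 0).2
  have k2b := (main_rel f g ψ hf hg hψ hf0 hg0 heq 0 1).2
  have k2d := (main_rel f g ψ hf hg hψ hf0 hg0 heq 1 1).2
  have h2 : iteratedDeriv 2 ψ 1 = deriv (deriv ψ) 1 := by
    rw [show (2:ℕ) = 1 + 1 from rfl, iteratedDeriv_succ, iteratedDeriv_one]
  rw [h2]
  linear_combination (-1/2)*k2d + (1/2)*k2a + (1/2)*k2b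
    + deriv g 0 * k1a + deriv f 0 * k1b
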